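/- For the Sprott system linearization matrix L = −(μI₃ + P₃) in ℝ³ (where P₃ is the cyclic permutation matrix sending x to (x₃,x₁,x₂)) and any f ∈ ℝ³, det[f, Lf, L²f] = −(1/2)(fᵀ𝟏)(fᵀHf), where H is the Hessian of the quadratic form x² + y² + z² − (yz + zx + xy), i.e., H = 2I₃ − (𝟏𝟏ᵀ − I₃) adjusted so fᵀHf = 2(f₁²+f₂²+f₃²) − 2(f₁f₂+f₂f₃+f₃f₁). -/
import Mathlib

open Matrix

/-- Sprott determinant identity: for L = −(μI₃ + P₃),
det[f, Lf, L²f] = −(1/2)(fᵀ𝟏)(fᵀHf), where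
fᵀHf = 2(f₁²+f₂²+f₃²) − 2(f₁f₂+f₂f₃+f₃f₁). -/
theorem sprott_det_identity (μ : ℝ) (f : Fin 3 → ℝ)
    (L : Matrix (Fin 3) (Fin 3) ℝ)
    (hL : L = !![-μ, 0, -1; -1, -μ, 0; 0, -1, -μ]) :
    (Matrix.of ![f, L.mulVec f, L.mulVec (L.mulVec f)]).transpose.det =
      -(1 / 2 : ℝ) * (f 0 + f 1 + f 2) *
        (2 * (f 0 ^ 2 + f 1 ^ 2 + f 2 ^ 2) - 2 * (f 0 * f 1 + f 1 * f 2 + f 2 * f 0)) := by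
  have h1 : L.mulVec f = ![-μ * f 0 - f 2, -f 0 - μ * f 1, -f 1 - μ * f 2] := by
    subst hL
    funext i
    fin_cases i <;>
      simp [Matrix.mulVec, dotProduct, Fin.sum_univ_three] <;> ring
  have h2 : L.mulVec (L.mulVec f) =
      ![-μ * (-μ * f 0 - f 2) - (-f 1 - μ * f 2),
        -(-μ * f 0 - f 2) - μ * (-f 0 - μ * f 1),
        -(-f 0 - μ * f 1) - μ * (-f 1 - μ * f 2)] := by
    rw [h1]; subst hL
    funext i
    fin_cases i <;>
      simp [Matrix.mulVec, dotProduct, Fin.sum_univ_three] <;> ring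
  rw [h2, h1]
  rw [Matrix.det_transpose]
  simp [Matrix.det_fin_three]
  ring
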